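/- Suppose X is a Polish space, (R_n)_{n∈ℕ} is a sequence of F_σ subsets of X × X, Γ is a group of homeomorphisms of X, and O ⊆ X is an orbit of Γ with the property that for every n ∈ ℕ and every open set U ⊆ X intersecting O, there are distinct points x, y ∈ O ∩ U such that O ∩ {z : (x,z) ∈ R_n} ∩ {z : (y,z) ∈ R_n} = ∅. Then there exists a continuous injective map φ : 2^ℕ → closure(O) such that for all y, z ∈ 2^ℕ: if y E₀ z then there is γ ∈ Γ with γ(φ(y)) = φ(z), and if ¬(y E₀ z) then (φ(y), φ(z)) ∉ ⋃_{n∈ℕ} R_n. -/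

import Mathlib

/-- `E₀`: eventual equality on Cantor space. -/
def E0 (x y : ℕ → Bool) : Prop := ∃ N : ℕ, ∀ n ≥ N, x n = y n

/-- A group of homeomorphisms of `X`: a subgroup of the group of
self-homeomorphisms of `X` under composition. -/
def IsHomeoGroup {X : Type*} [TopologicalSpace X] (Γ : Set (X ≃ₜ X)) : Prop :=
  Homeomorph.refl X ∈ Γ ∧ (∀ γ ∈ Γ, γ.symm ∈ Γ) ∧
    ∀ γ₁ ∈ Γ, ∀ γ₂ ∈ Γ, γ₁.trans γ₂ ∈ Γ

open Metric Set Filter Topology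

namespace Stmt6

/-- generic dependent choice -/
theorem depChoice {α : Type*} [Inhabited α] (P : ℕ → (ℕ → α) → Prop)
    (loc : ∀ n f g, (∀ m ≤ n, f m = g m) → P n f → P n g)
    (step : ∀ n f, (∀ m < n, P m f) → ∃ a, P n (Function.update f n a)) :
    ∃ f, ∀ n, P n f := by
  have step' : ∀ n f, ∃ a, (∀ m < n, P m f) → P n (Function.update f n a) := by
    intro n f
    by_cases h : ∀ m < n, P m f
    · exact (step n f h).imp fun a ha _ => ha
    · exact ⟨default, fun h' => absurd h' h⟩
  let H : ℕ → (ℕ → α) := fun n => Nat.rec (fun _ => default)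
    (fun k Hk => Function.update Hk k (step' k Hk).choose) n
  have hHsucc : ∀ k, H (k+1) = Function.update (H k) k (step' k (H k)).choose := fun k => rfl
  have agree : ∀ k k' m, m < k → k ≤ k' → H k m = H k' m := by
    intro k k' m hm hk
    induction k' with
    | zero => omega
    | succ k'' ih =>
      rcases Nat.lt_or_ge k (k''+1) with h | h
      · have : m < k'' := by omega
        rw [ih (by omega), hHsucc, Function.update_of_ne (by omega)]
      · have : k = k'' + 1 := by omega
        subst this; rfl
  refine ⟨fun n => H (n+1) n, fun n => ?_⟩
  induction n using Nat.strong_induction_on with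
  | _ n ih =>
    have hagree : ∀ m, m ≤ n → H (n+1) m = (fun j => H (j+1) j) m := by
      intro m hm
      exact (agree (m+1) (n+1) m (by omega) (by omega)).symm
    refine loc n (H (n+1)) _ hagree ?_
    rw [hHsucc]
    refine (step' n (H n)).choose_spec ?_
    intro m hm
    have hagree2 : ∀ j, j ≤ m → (fun j => H (j+1) j) j = H n j := by
      intro j hj
      exact agree (j+1) n j (by omega) (by omega)
    exact loc m _ _ hagree2 (ih m hm)

variable {X : Type*} [MetricSpace X]

/-- Stage data: a pair of group elements and a radius assignment. -/
abbrev SD (X : Type*) [TopologicalSpace X] : Type _ := (Bool → X ≃ₜ X) × ((ℕ → Bool) → ℝ)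

noncomputable def Uh (f : ℕ → SD X) (c : ℕ → Bool) : ℕ → X ≃ₜ X
  | 0 => Homeomorph.refl X
  | n+1 => ((f n).1 (c n)).trans (Uh f c n)

noncomputable def Vs (x₀ : X) (f : ℕ → SD X) (c : ℕ → Bool) : ℕ → Set X
  | 0 => Set.univ
  | n+1 => Metric.ball (Uh f c (n+1) x₀) ((f n).2 c)

def orb (Γ : Set (X ≃ₜ X)) (x₀ : X) : Set X := {y : X | ∃ γ ∈ Γ, γ x₀ = y}

structure InvAt (Γ : Set (X ≃ₜ X)) (x₀ : X) (C : ℕ → Set (X × X)) (f : ℕ → SD X)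
    (n : ℕ) : Prop where
  mem : ∀ i, (f n).1 i ∈ Γ
  rpos : ∀ c, 0 < (f n).2 c
  rsmall : ∀ c, (f n).2 c ≤ (1/2 : ℝ) ^ (n+1)
  rloc : ∀ c c', (∀ m ≤ n, c m = c' m) → (f n).2 c = (f n).2 c'
  nest : ∀ c, Metric.closedBall (Uh f c (n+1) x₀) ((f n).2 c) ⊆ Vs x₀ f c n
  split : ∀ c c', (∀ m, m < n → c m = c' m) → c n ≠ c' n →
    Disjoint (Metric.closedBall (Uh f c (n+1) x₀) ((f n).2 c))
      (Metric.closedBall (Uh f c' (n+1) x₀) ((f n).2 c'))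
  sep : ∀ m, m ≤ n → ∀ c c', c n ≠ c' n →
    ∀ p ∈ Metric.closedBall (Uh f c (n+1) x₀) ((f n).2 c),
    ∀ q ∈ Metric.closedBall (Uh f c' (n+1) x₀) ((f n).2 c'), (p, q) ∉ C m

variable {Γ : Set (X ≃ₜ X)} {x₀ : X} {C : ℕ → Set (X × X)}

theorem Uh_congr {f g : ℕ → SD X} {c : ℕ → Bool} {k : ℕ} (h : ∀ m < k, f m = g m) :
    Uh f c k = Uh g c k := by
  induction k with
  | zero => rfl
  | succ k ih =>
    show ((f k).1 (c k)).trans (Uh f c k) = ((g k).1 (c k)).trans (Uh g c k)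
    rw [ih (fun m hm => h m (by omega)), h k (by omega)]

theorem Vs_congr {f g : ℕ → SD X} {c : ℕ → Bool} {k : ℕ} (h : ∀ m < k, f m = g m) :
    Vs x₀ f c k = Vs x₀ g c k := by
  cases k with
  | zero => rfl
  | succ k =>
    show Metric.ball (Uh f c (k+1) x₀) ((f k).2 c) = Metric.ball (Uh g c (k+1) x₀) ((g k).2 c)
    rw [Uh_congr h, h k (by omega)]

theorem Uh_prefix {f : ℕ → SD X} {c c' : ℕ → Bool} {k : ℕ} (h : ∀ m < k, c m = c' m) :
    Uh f c k = Uh f c' k := by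
  induction k with
  | zero => rfl
  | succ k ih =>
    show ((f k).1 (c k)).trans (Uh f c k) = ((f k).1 (c' k)).trans (Uh f c' k)
    rw [ih (fun m hm => h m (by omega)), h k (by omega)]

theorem Vs_prefix {f : ℕ → SD X} {c c' : ℕ → Bool} {k : ℕ}
    (hI : ∀ m < k, InvAt Γ x₀ C f m) (h : ∀ m < k, c m = c' m) :
    Vs x₀ f c k = Vs x₀ f c' k := by
  cases k with
  | zero => rfl
  | succ k =>
    show Metric.ball (Uh f c (k+1) x₀) ((f k).2 c) = Metric.ball (Uh f c' (k+1) x₀) ((f k).2 c')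
    rw [Uh_prefix h, (hI k (by omega)).rloc c c' (fun m hm => h m (by omega))]

theorem Uh_mem (hΓ : IsHomeoGroup Γ) {f : ℕ → SD X} {c : ℕ → Bool} {k : ℕ}
    (h : ∀ m < k, ∀ i, (f m).1 i ∈ Γ) : Uh f c k ∈ Γ := by
  induction k with
  | zero => exact hΓ.1
  | succ k ih =>
    exact hΓ.2.2 _ (h k (by omega) (c k)) _ (ih fun m hm => h m (by omega))

theorem orb_self (hΓ : IsHomeoGroup Γ) : x₀ ∈ orb Γ x₀ := ⟨Homeomorph.refl X, hΓ.1, rfl⟩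

theorem orb_apply (hΓ : IsHomeoGroup Γ) {γ : X ≃ₜ X} (hγ : γ ∈ Γ) {x : X}
    (hx : x ∈ orb Γ x₀) : γ x ∈ orb Γ x₀ := by
  obtain ⟨δ, hδ, rfl⟩ := hx
  exact ⟨δ.trans γ, hΓ.2.2 δ hδ γ hγ, rfl⟩

theorem Uh_x₀_mem_orb (hΓ : IsHomeoGroup Γ) {f : ℕ → SD X} {c : ℕ → Bool} {k : ℕ}
    (h : ∀ m < k, ∀ i, (f m).1 i ∈ Γ) : Uh f c k x₀ ∈ orb Γ x₀ :=
  ⟨Uh f c k, Uh_mem hΓ h, rfl⟩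

theorem Vs_open {f : ℕ → SD X} {c : ℕ → Bool} (k : ℕ) : IsOpen (Vs x₀ f c k) := by
  cases k with
  | zero => exact isOpen_univ
  | succ k => exact Metric.isOpen_ball

theorem ctr_mem_Vs {f : ℕ → SD X} {c : ℕ → Bool} {k : ℕ}
    (hI : ∀ m < k, InvAt Γ x₀ C f m) : Uh f c k x₀ ∈ Vs x₀ f c k := by
  cases k with
  | zero => exact Set.mem_univ _
  | succ k => exact Metric.mem_ball_self ((hI k (by omega)).rpos c)


theorem InvAt_congr {f g : ℕ → SD X} {n : ℕ} (h : ∀ m ≤ n, f m = g m)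
    (hf : InvAt Γ x₀ C f n) : InvAt Γ x₀ C g n := by
  have hfn : g n = f n := (h n (le_refl n)).symm
  have hU : ∀ c : ℕ → Bool, Uh g c (n+1) = Uh f c (n+1) := fun c =>
    Uh_congr (fun m hm => (h m (by omega)).symm)
  have hV : ∀ c : ℕ → Bool, Vs x₀ g c n = Vs x₀ f c n := fun c =>
    Vs_congr (fun m hm => (h m (by omega)).symm)
  constructor
  · intro i; rw [hfn]; exact hf.mem i
  · intro c; rw [hfn]; exact hf.rpos c
  · intro c; rw [hfn]; exact hf.rsmall c
  · intro c c' hcc; rw [hfn]; exact hf.rloc c c' hcc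
  · intro c; rw [hfn, hU, hV]; exact hf.nest c
  · intro c c' h1 h2; rw [hfn, hU, hU]; exact hf.split c c' h1 h2
  · intro m hm c c' hne p hp q hq
    rw [hfn, hU] at hp hq
    exact hf.sep m hm c c' hne p hp q hq

section Step

variable (R : ℕ → Set (X × X))

/-- From `hsep`: find points in prescribed open sets whose transported pair avoids `R n`. -/
theorem pick (hΓ : IsHomeoGroup Γ)
    (hsep : ∀ (n : ℕ) (U : Set X), IsOpen U → (orb Γ x₀ ∩ U).Nonempty →
      ∃ x ∈ orb Γ x₀ ∩ U, ∃ y ∈ orb Γ x₀ ∩ U, x ≠ y ∧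
        orb Γ x₀ ∩ {z : X | (x, z) ∈ R n} ∩ {z : X | (y, z) ∈ R n} = ∅)
    (n : ℕ) (γ δ : X ≃ₜ X) (hγ : γ ∈ Γ) (hδ : δ ∈ Γ) (A B : Set X)
    (hA : IsOpen A) (hAn : (orb Γ x₀ ∩ A).Nonempty) (hBn : (orb Γ x₀ ∩ B).Nonempty) :
    ∃ a ∈ orb Γ x₀ ∩ A, ∃ b ∈ orb Γ x₀ ∩ B, (γ a, δ b) ∉ R n := by
  obtain ⟨a₀, ha₀o, ha₀A⟩ := hAn
  obtain ⟨b₀, hb₀o, hb₀B⟩ := hBn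
  have hU : IsOpen (γ '' A) := (Homeomorph.isOpen_image γ).2 hA
  have hUn : (orb Γ x₀ ∩ γ '' A).Nonempty :=
    ⟨γ a₀, orb_apply hΓ hγ ha₀o, Set.mem_image_of_mem _ ha₀A⟩
  obtain ⟨x, hx, y, hy, hxy, hemp⟩ := hsep n (γ '' A) hU hUn
  have hz : δ b₀ ∈ orb Γ x₀ := orb_apply hΓ hδ hb₀o
  have hkey : (x, δ b₀) ∉ R n ∨ (y, δ b₀) ∉ R n := by
    by_contra h
    push_neg at h
    have : δ b₀ ∈ orb Γ x₀ ∩ {z : X | (x, z) ∈ R n} ∩ {z : X | (y, z) ∈ R n} :=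
      ⟨⟨hz, h.1⟩, h.2⟩
    rw [hemp] at this
    exact this
  have main : ∀ w : X, w ∈ orb Γ x₀ ∩ γ '' A → (w, δ b₀) ∉ R n →
      ∃ a ∈ orb Γ x₀ ∩ A, ∃ b ∈ orb Γ x₀ ∩ B, (γ a, δ b) ∉ R n := by
    intro w hw hwR
    refine ⟨γ.symm w, ⟨orb_apply hΓ (hΓ.2.1 γ hγ) hw.1, ?_⟩, b₀, ⟨hb₀o, hb₀B⟩, ?_⟩
    · obtain ⟨aa, haa, rfl⟩ := hw.2
      simpa using haa
    · rwa [Homeomorph.apply_symm_apply]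
  rcases hkey with h | h
  · exact main x hx h
  · exact main y hy h

/-- Shrink two open sets so that all transported pairs avoid a closed piece. -/
theorem shrink (hΓ : IsHomeoGroup Γ)
    (hsep : ∀ (n : ℕ) (U : Set X), IsOpen U → (orb Γ x₀ ∩ U).Nonempty →
      ∃ x ∈ orb Γ x₀ ∩ U, ∃ y ∈ orb Γ x₀ ∩ U, x ≠ y ∧
        orb Γ x₀ ∩ {z : X | (x, z) ∈ R n} ∩ {z : X | (y, z) ∈ R n} = ∅)
    (m : ℕ) (hCcl : IsClosed (C m)) (j : ℕ) (hCR : C m ⊆ R j)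
    (γ δ : X ≃ₜ X) (hγ : γ ∈ Γ) (hδ : δ ∈ Γ) (A B : Set X)
    (hA : IsOpen A) (hB : IsOpen B)
    (hAn : (orb Γ x₀ ∩ A).Nonempty) (hBn : (orb Γ x₀ ∩ B).Nonempty) :
    ∃ A' B', IsOpen A' ∧ IsOpen B' ∧ A' ⊆ A ∧ B' ⊆ B ∧
      (orb Γ x₀ ∩ A').Nonempty ∧ (orb Γ x₀ ∩ B').Nonempty ∧
      ∀ a ∈ A', ∀ b ∈ B', (γ a, δ b) ∉ C m := by
  obtain ⟨a, ha, b, hb, hab⟩ := pick R hΓ hsep j γ δ hγ hδ A B hA hAn hBn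
  have habC : (γ a, δ b) ∉ C m := fun h => hab (hCR h)
  have hopen : IsOpen ((fun p : X × X => ((γ p.1, δ p.2) : X × X)) ⁻¹' (C m)ᶜ) := by
    refine IsOpen.preimage ?_ hCcl.isOpen_compl
    exact (γ.continuous.comp continuous_fst).prodMk (δ.continuous.comp continuous_snd)
  have habmem : (a, b) ∈ (fun p : X × X => ((γ p.1, δ p.2) : X × X)) ⁻¹' (C m)ᶜ := habC
  obtain ⟨u, v, hu, hv, hau, hbv, huv⟩ := isOpen_prod_iff.1 hopen a b habmem
  refine ⟨A ∩ u, B ∩ v, hA.inter hu, hB.inter hv, Set.inter_subset_left,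
    Set.inter_subset_left, ⟨a, ha.1, ha.2, hau⟩, ⟨b, hb.1, hb.2, hbv⟩, ?_⟩
  intro a' ha' b' hb' hC
  exact huv (Set.mk_mem_prod ha'.2 hb'.2) hC

/-- A task: `(γ, δ, m, o)`. If `o = true`, avoid pairs `(γ a, δ b)`; else `(γ b, δ a)`. -/
def TaskOK (C : ℕ → Set (X × X)) (p : (X ≃ₜ X) × (X ≃ₜ X) × ℕ × Bool)
    (A B : Set X) : Prop :=
  ∀ a ∈ A, ∀ b ∈ B,
    (p.2.2.2 = true → (p.1 a, p.2.1 b) ∉ C p.2.2.1) ∧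
    (p.2.2.2 = false → (p.1 b, p.2.1 a) ∉ C p.2.2.1)

theorem iterShrink (hΓ : IsHomeoGroup Γ)
    (hsep : ∀ (n : ℕ) (U : Set X), IsOpen U → (orb Γ x₀ ∩ U).Nonempty →
      ∃ x ∈ orb Γ x₀ ∩ U, ∃ y ∈ orb Γ x₀ ∩ U, x ≠ y ∧
        orb Γ x₀ ∩ {z : X | (x, z) ∈ R n} ∩ {z : X | (y, z) ∈ R n} = ∅)
    (hCcl : ∀ m, IsClosed (C m)) (hCR : ∀ m, ∃ j, C m ⊆ R j)
    (L : List ((X ≃ₜ X) × (X ≃ₜ X) × ℕ × Bool))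
    (hL : ∀ p ∈ L, p.1 ∈ Γ ∧ p.2.1 ∈ Γ) :
    ∀ A B : Set X, IsOpen A → IsOpen B →
      (orb Γ x₀ ∩ A).Nonempty → (orb Γ x₀ ∩ B).Nonempty →
      ∃ A' B', IsOpen A' ∧ IsOpen B' ∧ A' ⊆ A ∧ B' ⊆ B ∧
        (orb Γ x₀ ∩ A').Nonempty ∧ (orb Γ x₀ ∩ B').Nonempty ∧
        ∀ p ∈ L, TaskOK C p A' B' := by
  induction L with
  | nil =>
    intro A B hA hB hAn hBn
    exact ⟨A, B, hA, hB, le_refl _, le_refl _, hAn, hBn, fun p hp => absurd hp (by simp)⟩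
  | cons q L ih =>
    intro A B hA hB hAn hBn
    obtain ⟨A₁, B₁, hA₁, hB₁, hA₁s, hB₁s, hA₁n, hB₁n, hL₁⟩ :=
      ih (fun p hp => hL p (List.mem_cons_of_mem q hp)) A B hA hB hAn hBn
    have hq := hL q (List.mem_cons_self (a := q) (l := L))
    obtain ⟨j, hj⟩ := hCR q.2.2.1
    rcases hb : q.2.2.2 with _ | _
    · -- o = false : shrink with roles swapped
      obtain ⟨B₂, A₂, hB₂, hA₂, hB₂s, hA₂s, hB₂n, hA₂n, hcond⟩ :=
        shrink R hΓ hsep q.2.2.1 (hCcl _) j hj q.1 q.2.1 hq.1 hq.2 B₁ A₁ hB₁ hA₁ hB₁n hA₁n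
      refine ⟨A₂, B₂, hA₂, hB₂, hA₂s.trans hA₁s, hB₂s.trans hB₁s, hA₂n, hB₂n, ?_⟩
      intro p hp
      rcases List.mem_cons.1 hp with rfl | hp'
      · intro a ha b hbb
        constructor
        · intro h; rw [hb] at h; exact absurd h (by simp)
        · intro _; exact hcond b hbb a ha
      · intro a ha b hbb
        exact hL₁ p hp' a (hA₂s ha) b (hB₂s hbb)
    · -- o = true
      obtain ⟨A₂, B₂, hA₂, hB₂, hA₂s, hB₂s, hA₂n, hB₂n, hcond⟩ :=
        shrink R hΓ hsep q.2.2.1 (hCcl _) j hj q.1 q.2.1 hq.1 hq.2 A₁ B₁ hA₁ hB₁ hA₁n hB₁n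
      refine ⟨A₂, B₂, hA₂, hB₂, hA₂s.trans hA₁s, hB₂s.trans hB₁s, hA₂n, hB₂n, ?_⟩
      intro p hp
      rcases List.mem_cons.1 hp with rfl | hp'
      · intro a ha b hbb
        constructor
        · intro _; exact hcond a ha b hbb
        · intro h; rw [hb] at h; exact absurd h (by simp)
      · intro a ha b hbb
        exact hL₁ p hp' a (hA₂s ha) b (hB₂s hbb)

end Step


section BigStep

variable (R : ℕ → Set (X × X))

theorem step (hΓ : IsHomeoGroup Γ)
    (hsep : ∀ (n : ℕ) (U : Set X), IsOpen U → (orb Γ x₀ ∩ U).Nonempty →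
      ∃ x ∈ orb Γ x₀ ∩ U, ∃ y ∈ orb Γ x₀ ∩ U, x ≠ y ∧
        orb Γ x₀ ∩ {z : X | (x, z) ∈ R n} ∩ {z : X | (y, z) ∈ R n} = ∅)
    (hCcl : ∀ m, IsClosed (C m)) (hCR : ∀ m, ∃ j, C m ⊆ R j)
    (n : ℕ) (f : ℕ → SD X) (hI : ∀ m < n, InvAt Γ x₀ C f m) :
    ∃ d : SD X, InvAt Γ x₀ C (Function.update f n d) n := by
  classical
  -- the finite intersection of transported open sets
  set ext : (Fin n → Bool) → (ℕ → Bool) :=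
    fun τ m => if h : m < n then τ ⟨m, h⟩ else false with hextdef
  have hext_pre : ∀ (c : ℕ → Bool) (m : ℕ), m < n → ext (fun i => c i) m = c m := by
    intro c m hm; simp [hextdef, hm]
  set W : Set X := ⋂ τ : Fin n → Bool, (Uh f (ext τ) n) ⁻¹' (Vs x₀ f (ext τ) n) with hWdef
  have hWopen : IsOpen W := isOpen_iInter_of_finite fun τ =>
    IsOpen.preimage (Homeomorph.continuous _) (Vs_open _)
  have hx₀W : x₀ ∈ W := Set.mem_iInter.2 fun τ => ctr_mem_Vs hI
  have trans_mem : ∀ (c : ℕ → Bool) (w : X), w ∈ W → Uh f c n w ∈ Vs x₀ f c n := by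
    intro c w hw
    have h1 := Set.mem_iInter.1 hw (fun i => c i)
    have h2 : Uh f (ext fun i => c i) n = Uh f c n := Uh_prefix (hext_pre c)
    have h3 : Vs x₀ f (ext fun i => c i) n = Vs x₀ f c n := Vs_prefix hI (hext_pre c)
    rw [h2, h3] at h1
    exact h1
  -- the tasks
  set L : List ((X ≃ₜ X) × (X ≃ₜ X) × ℕ × Bool) :=
    ((Finset.univ : Finset ((Fin n → Bool) × (Fin n → Bool) × Fin (n+1) × Bool)).toList).map
      (fun q => (Uh f (ext q.1) n, Uh f (ext q.2.1) n, (q.2.2.1 : ℕ), q.2.2.2)) with hLdef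
  have hUmem : ∀ c : ℕ → Bool, Uh f c n ∈ Γ := fun c =>
    Uh_mem hΓ (fun m hm i => (hI m hm).mem i)
  have hLmem : ∀ p ∈ L, p.1 ∈ Γ ∧ p.2.1 ∈ Γ := by
    intro p hp
    obtain ⟨q, -, rfl⟩ := List.mem_map.1 hp
    exact ⟨hUmem _, hUmem _⟩
  obtain ⟨A', B', hA'o, hB'o, hA's, hB's, hA'n, hB'n, hTasks⟩ :=
    iterShrink R hΓ hsep hCcl hCR L hLmem W W hWopen hWopen
      ⟨x₀, orb_self hΓ, hx₀W⟩ ⟨x₀, orb_self hΓ, hx₀W⟩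
  -- choose the two points
  obtain ⟨a, hao, haA⟩ := hA'n
  obtain ⟨x, hx, y, hy, hxy, -⟩ := hsep 0 B' hB'o hB'n
  obtain ⟨b, hbo, hbB, hba⟩ : ∃ b, b ∈ orb Γ x₀ ∧ b ∈ B' ∧ b ≠ a := by
    by_cases hxa : x = a
    · exact ⟨y, hy.1, hy.2, fun h => hxy (by rw [hxa, h])⟩
    · exact ⟨x, hx.1, hx.2, hxa⟩
  obtain ⟨v0, hv0Γ, hv0⟩ := hao
  obtain ⟨v1, hv1Γ, hv1⟩ := hbo
  -- centers and target open sets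
  set pt : (ℕ → Bool) → X := fun c => Uh f c n (bif c n then b else a) with hptdef
  set Gs : (ℕ → Bool) → Set X :=
    fun c => Vs x₀ f c n ∩ (Uh f c n) '' (bif c n then B' else A') with hGdef
  have hGopen : ∀ c, IsOpen (Gs c) := by
    intro c
    refine (Vs_open n).inter ?_
    cases c n
    · exact (Homeomorph.isOpen_image _).2 hA'o
    · exact (Homeomorph.isOpen_image _).2 hB'o
  have hptG : ∀ c, pt c ∈ Gs c := by
    intro c
    cases hc : c n <;> simp only [hptdef, hGdef, hc, Bool.cond_false, Bool.cond_true]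
    · exact ⟨trans_mem c a (hA's haA), Set.mem_image_of_mem _ haA⟩
    · exact ⟨trans_mem c b (hB's hbB), Set.mem_image_of_mem _ hbB⟩
  have dab : ∀ c : ℕ → Bool, 0 < dist (Uh f c n a) (Uh f c n b) := by
    intro c
    refine dist_pos.2 fun h => hba ?_
    exact ((Uh f c n).injective h).symm
  have hEx : ∀ c : ℕ → Bool, ∃ ρ : ℝ, 0 < ρ ∧ ρ ≤ (1/2 : ℝ) ^ (n+1) ∧
      Metric.closedBall (pt c) ρ ⊆ Gs c ∧
      ρ ≤ dist (Uh f c n a) (Uh f c n b) / 3 := by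
    intro c
    obtain ⟨ε, hε, hball⟩ := Metric.isOpen_iff.1 (hGopen c) (pt c) (hptG c)
    refine ⟨min (min (ε/2) ((1/2 : ℝ) ^ (n+1))) (dist (Uh f c n a) (Uh f c n b) / 3),
      ?_, ?_, ?_, ?_⟩
    · have h1 : (0:ℝ) < (1/2 : ℝ) ^ (n+1) := by positivity
      have := dab c
      have h2 : 0 < ε / 2 := by linarith
      exact lt_min (lt_min h2 h1) (by linarith)
    · exact (min_le_left _ _).trans (min_le_right _ _)
    · refine (Metric.closedBall_subset_ball ?_).trans hball
      have h2 : 0 < ε / 2 := by linarith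
      calc min (min (ε/2) ((1/2 : ℝ) ^ (n+1))) (dist (Uh f c n a) (Uh f c n b) / 3)
          ≤ ε / 2 := (min_le_left _ _).trans (min_le_left _ _)
        _ < ε := by linarith
    · exact min_le_right _ _
  set trunc : (ℕ → Bool) → (ℕ → Bool) := fun c m => if m ≤ n then c m else false with htrdef
  have htr : ∀ (c : ℕ → Bool) (m : ℕ), m ≤ n → trunc c m = c m := by
    intro c m hm; simp [htrdef, hm]
  have hUtr : ∀ c : ℕ → Bool, Uh f (trunc c) n = Uh f c n := fun c =>
    Uh_prefix (fun m hm => htr c m (by omega))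
  have hpt_tr : ∀ c, pt (trunc c) = pt c := by
    intro c
    simp only [hptdef, hUtr, htr c n (le_refl n)]
  have hGs_tr : ∀ c, Gs (trunc c) = Gs c := by
    intro c
    simp only [hGdef, hUtr, htr c n (le_refl n),
      Vs_prefix hI (fun m hm => htr c m (by omega))]
  have hd_tr : ∀ c, dist (Uh f (trunc c) n a) (Uh f (trunc c) n b)
      = dist (Uh f c n a) (Uh f c n b) := by
    intro c; rw [hUtr]
  -- the stage data
  refine ⟨((fun i => bif i then v1 else v0), fun c => (hEx (trunc c)).choose), ?_⟩
  set d : SD X := ((fun i => bif i then v1 else v0), fun c => (hEx (trunc c)).choose)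
    with hddef
  set F' : ℕ → SD X := Function.update f n d with hF'def
  have hflow : ∀ m, m < n → F' m = f m := fun m hm =>
    Function.update_of_ne (by omega) _ _
  have hFn : F' n = d := Function.update_self _ _ _
  have hUlow : ∀ (c : ℕ → Bool) (k : ℕ), k ≤ n → Uh F' c k = Uh f c k := fun c k hk =>
    Uh_congr (fun m hm => hflow m (by omega))
  have hVn : ∀ c : ℕ → Bool, Vs x₀ F' c n = Vs x₀ f c n := fun c =>
    Vs_congr (fun m hm => hflow m hm)
  have hUtop : ∀ c : ℕ → Bool, Uh F' c (n+1) x₀ = pt c := by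
    intro c
    show ((F' n).1 (c n)).trans (Uh F' c n) x₀ = pt c
    rw [Homeomorph.trans_apply, hUlow c n (le_refl n), hFn]
    cases hc : c n <;> simp only [hddef, hptdef, hc, Bool.cond_false, Bool.cond_true, hv0, hv1]
  have hrr : ∀ c : ℕ → Bool, (F' n).2 c = (hEx (trunc c)).choose := by
    intro c; rw [hFn]
  have spec1 : ∀ c : ℕ → Bool, 0 < (F' n).2 c := by
    intro c; rw [hrr]; exact (hEx (trunc c)).choose_spec.1
  have spec2 : ∀ c : ℕ → Bool, (F' n).2 c ≤ (1/2 : ℝ) ^ (n+1) := by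
    intro c; rw [hrr]; exact (hEx (trunc c)).choose_spec.2.1
  have spec3 : ∀ c : ℕ → Bool, Metric.closedBall (pt c) ((F' n).2 c) ⊆ Gs c := by
    intro c; rw [hrr]
    rw [← hpt_tr c, ← hGs_tr c]
    exact (hEx (trunc c)).choose_spec.2.2.1
  have spec4 : ∀ c : ℕ → Bool, (F' n).2 c ≤ dist (Uh f c n a) (Uh f c n b) / 3 := by
    intro c; rw [hrr]
    rw [← hd_tr c]
    exact (hEx (trunc c)).choose_spec.2.2.2
  constructor
  · -- mem
    intro i
    rw [hFn]
    cases i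
    · exact hv0Γ
    · exact hv1Γ
  · exact spec1
  · exact spec2
  · -- rloc
    intro c c' hcc
    rw [hrr, hrr]
    have htt : trunc c = trunc c' := by
      funext m
      by_cases hm : m ≤ n
      · rw [htr c m hm, htr c' m hm, hcc m hm]
      · simp [htrdef, hm]
    exact congrArg (fun t => (hEx t).choose) htt
  · -- nest
    intro c
    rw [hUtop, hVn]
    exact (spec3 c).trans Set.inter_subset_left
  · -- split
    intro c c' hpre hne
    rw [hUtop, hUtop]
    have huu : Uh f c' n = Uh f c n := Uh_prefix (fun m hm => (hpre m hm).symm)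
    have h4 := spec4 c
    have h4' := spec4 c'
    rw [huu] at h4'
    have hd := dab c
    cases hc : c n <;> cases hc' : c' n
    · rw [hc, hc'] at hne; exact absurd rfl hne
    · -- c n = false, c' n = true
      simp only [hptdef, hc, hc', Bool.cond_false, Bool.cond_true, huu]
      exact Metric.closedBall_disjoint_closedBall (by linarith)
    · -- c n = true, c' n = false
      simp only [hptdef, hc, hc', Bool.cond_false, Bool.cond_true, huu]
      refine Metric.closedBall_disjoint_closedBall ?_
      rw [dist_comm]
      linarith
    · rw [hc, hc'] at hne; exact absurd rfl hne
  · -- sep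
    intro m hm c c' hne p hp q hq hCmem
    rw [hUtop] at hp hq
    have hpG := spec3 c hp
    have hqG := spec3 c' hq
    have hUc : Uh f (ext fun i => c i) n = Uh f c n := Uh_prefix (hext_pre c)
    have hUc' : Uh f (ext fun i => c' i) n = Uh f c' n := Uh_prefix (hext_pre c')
    cases hc : c n
    · -- c n = false, c' n = true: orientation true, p = γ a', q = δ b'
      have hc' : c' n = true := by
        cases hcc : c' n
        · rw [hc, hcc] at hne; exact absurd rfl hne
        · rfl
      rw [hGdef] at hpG hqG
      simp only [hc, hc', Bool.cond_false, Bool.cond_true] at hpG hqG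
      obtain ⟨a', ha', hpa⟩ := hpG.2
      obtain ⟨b', hb', hqb⟩ := hqG.2
      have hLmem2 : (Uh f (ext fun i => c i) n, Uh f (ext fun i => c' i) n, m, true) ∈ L := by
        rw [hLdef]
        refine List.mem_map.2 ⟨((fun i => c i), (fun i => c' i), ⟨m, by omega⟩, true), ?_, rfl⟩
        exact Finset.mem_toList.2 (Finset.mem_univ _)
      have := (hTasks _ hLmem2 a' ha' b' hb').1 rfl
      rw [hUc, hUc', hpa, hqb] at this
      exact this hCmem
    · -- c n = true, c' n = false
      have hc' : c' n = false := by
        cases hcc : c' n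
        · rfl
        · rw [hc, hcc] at hne; exact absurd rfl hne
      rw [hGdef] at hpG hqG
      simp only [hc, hc', Bool.cond_false, Bool.cond_true] at hpG hqG
      obtain ⟨b', hb', hpb⟩ := hpG.2
      obtain ⟨a', ha', hqa⟩ := hqG.2
      have hLmem2 : (Uh f (ext fun i => c i) n, Uh f (ext fun i => c' i) n, m, false) ∈ L := by
        rw [hLdef]
        refine List.mem_map.2 ⟨((fun i => c i), (fun i => c' i), ⟨m, by omega⟩, false), ?_, rfl⟩
        exact Finset.mem_toList.2 (Finset.mem_univ _)
      have := (hTasks _ hLmem2 a' ha' b' hb').2 rfl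
      rw [hUc, hUc', hpb, hqa] at this
      exact this hCmem

end BigStep


theorem main_aux {Y : Type*} [MetricSpace Y] [CompleteSpace Y]
    (R : ℕ → Set (Y × Y)) (Γ : Set (Y ≃ₜ Y)) (hΓ : IsHomeoGroup Γ) (x₀ : Y)
    (hsep : ∀ (n : ℕ) (U : Set Y), IsOpen U → (orb Γ x₀ ∩ U).Nonempty →
      ∃ x ∈ orb Γ x₀ ∩ U, ∃ y ∈ orb Γ x₀ ∩ U, x ≠ y ∧
        orb Γ x₀ ∩ {z : Y | (x, z) ∈ R n} ∩ {z : Y | (y, z) ∈ R n} = ∅)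
    (C : ℕ → Set (Y × Y)) (hCcl : ∀ m, IsClosed (C m)) (hCR : ∀ m, ∃ j, C m ⊆ R j) :
    ∃ φ : (ℕ → Bool) → Y, Continuous φ ∧ Function.Injective φ ∧
      (∀ c : ℕ → Bool, φ c ∈ closure (orb Γ x₀)) ∧
      ∀ y z : ℕ → Bool,
        (E0 y z → ∃ γ ∈ Γ, γ (φ y) = φ z) ∧
        (¬ E0 y z → ∀ m, (φ y, φ z) ∉ C m) := by
  classical
  haveI : Inhabited (SD Y) := ⟨(fun _ => Homeomorph.refl Y, fun _ => 0)⟩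
  obtain ⟨F, hF⟩ := depChoice (fun n f => InvAt Γ x₀ C f n)
    (fun n f g h hf => InvAt_congr h hf)
    (fun n f h => step R hΓ hsep hCcl hCR n f h)
  have half_lt : (1/2 : ℝ) < 1 := by norm_num
  -- nesting
  have Vsub : ∀ (c : ℕ → Bool) (k : ℕ), Vs x₀ F c (k+1) ⊆ Vs x₀ F c k := by
    intro c k
    have h1 : Vs x₀ F c (k+1) ⊆ Metric.closedBall (Uh F c (k+1) x₀) ((F k).2 c) :=
      Metric.ball_subset_closedBall
    exact h1.trans ((hF k).nest c)
  have Vmono : ∀ (c : ℕ → Bool) (k m : ℕ), k ≤ m → Vs x₀ F c m ⊆ Vs x₀ F c k := by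
    intro c k m hkm
    induction m, hkm using Nat.le_induction with
    | base => exact le_refl _
    | succ m hm ih => exact (Vsub c m).trans ih
  have memVs : ∀ (c : ℕ → Bool) (k m : ℕ), k ≤ m → Uh F c m x₀ ∈ Vs x₀ F c k := by
    intro c k m hkm
    exact Vmono c k m hkm (ctr_mem_Vs (fun j _ => hF j))
  -- convergence
  have cauchy : ∀ c : ℕ → Bool, CauchySeq (fun m => Uh F c m x₀) := by
    intro c
    refine Metric.cauchySeq_iff'.2 fun ε hε => ?_
    obtain ⟨k, hk⟩ := exists_pow_lt_of_lt_one hε half_lt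
    refine ⟨k+1, fun m hm => ?_⟩
    have hmem : Uh F c m x₀ ∈ Metric.ball (Uh F c (k+1) x₀) ((F k).2 c) :=
      memVs c (k+1) m hm
    have h1 : dist (Uh F c m x₀) (Uh F c (k+1) x₀) < (F k).2 c := Metric.mem_ball.1 hmem
    have h2 : (F k).2 c ≤ (1/2 : ℝ) ^ (k+1) := (hF k).rsmall c
    have h3 : ((1:ℝ)/2) ^ (k+1) ≤ (1/2 : ℝ) ^ k := by
      rw [pow_succ]
      nlinarith [pow_pos (by norm_num : (0:ℝ) < 1/2) k]
    linarith
  have hconv : ∀ c : ℕ → Bool, ∃ p, Tendsto (fun m => Uh F c m x₀) atTop (𝓝 p) :=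
    fun c => cauchySeq_tendsto_of_complete (cauchy c)
  set φ : (ℕ → Bool) → Y := fun c => (hconv c).choose with hφdef
  have hφ : ∀ c, Tendsto (fun m => Uh F c m x₀) atTop (𝓝 (φ c)) :=
    fun c => (hconv c).choose_spec
  have φmemcb : ∀ (c : ℕ → Bool) (k : ℕ),
      φ c ∈ Metric.closedBall (Uh F c (k+1) x₀) ((F k).2 c) := by
    intro c k
    have h1 : φ c ∈ closure (Vs x₀ F c (k+1)) :=
      mem_closure_of_tendsto (hφ c) (eventually_atTop.2 ⟨k+1, fun m hm => memVs c (k+1) m hm⟩)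
    have h2 : closure (Vs x₀ F c (k+1)) ⊆ Metric.closedBall (Uh F c (k+1) x₀) ((F k).2 c) :=
      Metric.closure_ball_subset_closedBall
    exact h2 h1
  have φmemO : ∀ c : ℕ → Bool, φ c ∈ closure (orb Γ x₀) := by
    intro c
    exact mem_closure_of_tendsto (hφ c)
      (Eventually.of_forall fun m => Uh_x₀_mem_orb hΓ (fun j _ i => (hF j).mem i))
  have distbound : ∀ (c c' : ℕ → Bool) (k : ℕ), (∀ m ≤ k, c m = c' m) →
      dist (φ c) (φ c') ≤ (1/2 : ℝ) ^ k := by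
    intro c c' k h
    have e1 : Uh F c' (k+1) = Uh F c (k+1) := Uh_prefix (fun m hm => (h m (by omega)).symm)
    have e2 : (F k).2 c' = (F k).2 c := (hF k).rloc c' c (fun m hm => (h m hm).symm)
    have h1 := φmemcb c k
    have h2 := φmemcb c' k
    rw [e1, e2] at h2
    have d1 : dist (φ c) (Uh F c (k+1) x₀) ≤ (F k).2 c := Metric.mem_closedBall.1 h1
    have d2 : dist (φ c') (Uh F c (k+1) x₀) ≤ (F k).2 c := Metric.mem_closedBall.1 h2
    have h3 : (F k).2 c ≤ (1/2 : ℝ) ^ (k+1) := (hF k).rsmall c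
    have h4 : ((1:ℝ)/2) ^ (k+1) = (1/2 : ℝ) ^ k / 2 := by rw [pow_succ]; ring
    have := dist_triangle_right (φ c) (φ c') (Uh F c (k+1) x₀)
    linarith
  refine ⟨φ, ?_, ?_, φmemO, ?_⟩
  · -- continuity
    rw [continuous_iff_continuousAt]
    intro c
    rw [ContinuousAt, Metric.tendsto_nhds]
    intro ε hε
    obtain ⟨k, hk⟩ := exists_pow_lt_of_lt_one hε half_lt
    have hopen : IsOpen {c' : ℕ → Bool | ∀ m ≤ k, c' m = c m} := by
      have he : {c' : ℕ → Bool | ∀ m ≤ k, c' m = c m}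
          = ⋂ m ∈ Set.Iic k, {c' : ℕ → Bool | c' m = c m} := by
        ext c'; simp [Set.mem_Iic]
      rw [he]
      refine (Set.finite_Iic k).isOpen_biInter fun m _ => ?_
      have : {c' : ℕ → Bool | c' m = c m} = (fun c' : ℕ → Bool => c' m) ⁻¹' {c m} := rfl
      rw [this]
      exact IsOpen.preimage (continuous_apply m) (isOpen_discrete _)
    filter_upwards [hopen.mem_nhds (by intro m _; rfl : c ∈ _)] with c' hc'
    exact lt_of_le_of_lt (distbound c' c k hc') hk
  · -- injectivity
    intro c c' hcc
    by_contra hne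
    have hex : ∃ n, c n ≠ c' n := by
      by_contra h
      push_neg at h
      exact hne (funext h)
    have hk : c (Nat.find hex) ≠ c' (Nat.find hex) := Nat.find_spec hex
    have hmin : ∀ m, m < Nat.find hex → c m = c' m := fun m hm =>
      not_not.1 (Nat.find_min hex hm)
    have hdisj := (hF (Nat.find hex)).split c c' hmin hk
    exact (Set.disjoint_left.1 hdisj (φmemcb c (Nat.find hex)))
      (by rw [hcc]; exact φmemcb c' (Nat.find hex))
  · -- E0 properties
    intro y z
    constructor
    · rintro ⟨N, hN⟩
      have hUmemF : ∀ (c : ℕ → Bool) (k : ℕ), Uh F c k ∈ Γ := fun c k =>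
        Uh_mem hΓ (fun j _ i => (hF j).mem i)
      set γ : Y ≃ₜ Y := ((Uh F y N).symm).trans (Uh F z N) with hγdef
      have hγΓ : γ ∈ Γ := hΓ.2.2 _ (hΓ.2.1 _ (hUmemF y N)) _ (hUmemF z N)
      have key : ∀ m, N ≤ m → ∀ x : Y, Uh F z m x = γ (Uh F y m x) := by
        intro m hm
        induction m, hm using Nat.le_induction with
        | base =>
          intro x
          simp [hγdef, Homeomorph.trans_apply]
        | succ m hm ih =>
          intro x
          have hz : Uh F z (m+1) x = Uh F z m ((F m).1 (z m) x) := rfl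
          have hy : Uh F y (m+1) x = Uh F y m ((F m).1 (y m) x) := rfl
          rw [hz, hy, ih, hN m hm]
      refine ⟨γ, hγΓ, ?_⟩
      have t2 : Tendsto (fun m => γ (Uh F y m x₀)) atTop (𝓝 (γ (φ y))) :=
        (γ.continuous.tendsto (φ y)).comp (hφ y)
      have t3 : Tendsto (fun m => Uh F z m x₀) atTop (𝓝 (γ (φ y))) := by
        refine t2.congr' ?_
        filter_upwards [eventually_ge_atTop N] with m hm
        exact (key m hm x₀).symm
      exact tendsto_nhds_unique t3 (hφ z)
    · intro hne m hmem
      have hinf : ∀ N, ∃ n, n ≥ N ∧ y n ≠ z n := by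
        rw [E0] at hne
        push_neg at hne
        exact hne
      obtain ⟨k, hk, hyk⟩ := hinf m
      exact (hF k).sep m hk y z hyk _ (φmemcb y k) _ (φmemcb z k) hmem

end Stmt6

/-- embedding of `(E₀, ∼E₀)` into `(E_Γ, ∼⋃ₙ Rₙ)` inside the
closure of a suitable orbit. -/
theorem stmt_6 {X : Type*} [TopologicalSpace X] [PolishSpace X]
    (R : ℕ → Set (X × X))
    (hR : ∀ n : ℕ, ∃ F : ℕ → Set (X × X), (∀ k, IsClosed (F k)) ∧ R n = ⋃ k, F k)
    (Γ : Set (X ≃ₜ X)) (hΓ : IsHomeoGroup Γ)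
    (O : Set X) (hO : ∃ x₀ : X, O = {y : X | ∃ γ ∈ Γ, γ x₀ = y})
    (hsep : ∀ (n : ℕ) (U : Set X), IsOpen U → (O ∩ U).Nonempty →
      ∃ x ∈ O ∩ U, ∃ y ∈ O ∩ U, x ≠ y ∧
        O ∩ {z : X | (x, z) ∈ R n} ∩ {z : X | (y, z) ∈ R n} = ∅) :
    ∃ φ : (ℕ → Bool) → X, Continuous φ ∧ Function.Injective φ ∧
      (∀ c : ℕ → Bool, φ c ∈ closure O) ∧
      ∀ y z : ℕ → Bool,
        (E0 y z → ∃ γ ∈ Γ, γ (φ y) = φ z) ∧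
        (¬ E0 y z → (φ y, φ z) ∉ ⋃ n, R n) := by
  classical
  letI := TopologicalSpace.upgradeIsCompletelyMetrizable X
  obtain ⟨x₀, rfl⟩ := hO
  obtain ⟨Fc, hFc⟩ : ∃ Fc : ℕ → ℕ → Set (X × X),
      ∀ n, (∀ k, IsClosed (Fc n k)) ∧ R n = ⋃ k, Fc n k :=
    ⟨fun n => (hR n).choose, fun n => (hR n).choose_spec⟩
  set C : ℕ → Set (X × X) := fun m => Fc m.unpair.1 m.unpair.2 with hCdef
  have hCcl : ∀ m, IsClosed (C m) := fun m => (hFc m.unpair.1).1 _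
  have hCR : ∀ m, ∃ j, C m ⊆ R j := by
    intro m
    refine ⟨m.unpair.1, ?_⟩
    rw [(hFc m.unpair.1).2]
    show Fc m.unpair.1 m.unpair.2 ⊆ _
    exact Set.subset_iUnion _ _
  obtain ⟨φ, hcont, hinj, hclos, hprop⟩ :=
    Stmt6.main_aux R Γ hΓ x₀ hsep C hCcl hCR
  refine ⟨φ, hcont, hinj, hclos, fun y z => ⟨(hprop y z).1, fun hne hmem => ?_⟩⟩
  obtain ⟨n, hn⟩ := Set.mem_iUnion.1 hmem
  rw [(hFc n).2] at hn
  obtain ⟨k, hk⟩ := Set.mem_iUnion.1 hn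
  refine (hprop y z).2 hne (Nat.pair n k) ?_
  show (φ y, φ z) ∈ C (Nat.pair n k)
  rw [hCdef]
  simp only [Nat.unpair_pair]
  exact hk
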